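/- For p ≥ 0, s, t ≥ 1, and n = s + t + p, the balanced bipartite graph M_{n,n}^{s,t} is not 2p-Hamilton-biconnected. -/

import Mathlib

/-- Bipartite graph on `α ⊕ β` determined by a cross relation. -/
def crossGraph {α β : Type*} (r : α → β → Prop) : SimpleGraph (α ⊕ β) where
  Adj u v := match u, v with
    | Sum.inl i, Sum.inr j => r i j
    | Sum.inr j, Sum.inl i => r i j
    | _, _ => False
  symm := ⟨by rintro (i|i) (j|j) h <;> first | exact h.elim | exact h⟩
  loopless := ⟨by rintro (i|i) h <;> exact h⟩

/-- The graph `M_{n,m}^{s,t}`: left vertices `i < s` form `X₁`, the rest `X₂`; right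
vertices `j < m - t` form `Y₁`, the rest `Y₂`.  Edges: `X₁–Y₁`, `X₂–Y₁`, `X₂–Y₂`. -/
def Mgraph (n m s t : ℕ) : SimpleGraph (Fin n ⊕ Fin m) :=
  crossGraph (fun i j => s ≤ (i : ℕ) ∨ (j : ℕ) < m - t)

/-- A balanced bipartite graph `G` with parts `X, Y` is `2p`-Hamilton-biconnected:
for every `W` meeting each part in `p` vertices, the subgraph induced on the complement of
`W` has a Hamiltonian path between any vertex of `X \ W` and any vertex of `Y \ W`. -/
def TwoPHamBic {V : Type*} [DecidableEq V] (G : SimpleGraph V) (X Y : Finset V) (p : ℕ) :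
    Prop :=
  ∀ W : Finset V, (W ∩ X).card = p → (W ∩ Y).card = p →
    ∀ x ∈ X, ∀ y ∈ Y, ∀ (hx : x ∉ W) (hy : y ∉ W),
      ∃ w : (G.induce {v : V | v ∉ W}).Walk ⟨x, hx⟩ ⟨y, hy⟩, w.IsHamiltonian

lemma card_filter_fin (n a b : ℕ) (hb : b ≤ n) :
    (Finset.filter (fun i : Fin n => a ≤ (i : ℕ) ∧ (i : ℕ) < b) Finset.univ).card
      = b - a := by
  rw [← Finset.card_image_of_injective _ Fin.val_injective]
  have himg : (Finset.filter (fun i : Fin n => a ≤ (i : ℕ) ∧ (i : ℕ) < b)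
        Finset.univ).image Fin.val = Finset.Ico a b := by
    ext m
    simp only [Finset.mem_image, Finset.mem_filter, Finset.mem_univ, true_and, Finset.mem_Ico]
    constructor
    · rintro ⟨i, ⟨h1, h2⟩, rfl⟩; exact ⟨h1, h2⟩
    · rintro ⟨h1, h2⟩; exact ⟨⟨m, by omega⟩, ⟨h1, h2⟩, rfl⟩
  rw [himg, Nat.card_Ico]

/-- For `p ≥ 0`, `s, t ≥ 1` and `n = s + t + p`, the graph
`M_{n,n}^{s,t}` is not `2p`-Hamilton-biconnected. -/
theorem stmt13 (n s t p : ℕ) (hs : 1 ≤ s) (ht : 1 ≤ t) (hn : n = s + t + p) :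
    ¬ TwoPHamBic (Mgraph n n s t)
      (Finset.univ.image Sum.inl) (Finset.univ.image Sum.inr) p := by
  intro H
  have hspn : s + p < n := by omega
  have hn0 : 0 < n := by omega
  -- the removed set
  set A : Finset (Fin n) := Finset.univ.filter (fun i => s ≤ (i : ℕ) ∧ (i : ℕ) < s + p)
    with hA
  set W : Finset (Fin n ⊕ Fin n) := A.image Sum.inl ∪ A.image Sum.inr with hW
  have hAcard : A.card = p := by
    rw [hA, card_filter_fin n s (s + p) (by omega)]; omega
  have hWX : (W ∩ Finset.univ.image Sum.inl).card = p := by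
    have : W ∩ Finset.univ.image Sum.inl = A.image Sum.inl := by
      ext v
      rcases v with i | j <;>
        simp [hW]
    rw [this, Finset.card_image_of_injective _ Sum.inl_injective, hAcard]
  have hWY : (W ∩ Finset.univ.image Sum.inr).card = p := by
    have : W ∩ Finset.univ.image Sum.inr = A.image Sum.inr := by
      ext v
      rcases v with i | j <;>
        simp [hW]
    rw [this, Finset.card_image_of_injective _ Sum.inr_injective, hAcard]
  set x : Fin n ⊕ Fin n := Sum.inl ⟨s + p, hspn⟩ with hxdef
  set y : Fin n ⊕ Fin n := Sum.inr ⟨0, hn0⟩ with hydef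
  have hxX : x ∈ Finset.univ.image Sum.inl := by
    exact Finset.mem_image.mpr ⟨_, Finset.mem_univ _, rfl⟩
  have hyY : y ∈ Finset.univ.image Sum.inr := by
    exact Finset.mem_image.mpr ⟨_, Finset.mem_univ _, rfl⟩
  have hxW : x ∉ W := by
    simp [hW, hxdef, hA]
  have hyW : y ∉ W := by
    simp [hW, hydef, hA]
    omega
  -- predicates for remaining X₁ and remaining Y₁
  set pXb : (Fin n ⊕ Fin n) → Bool :=
    fun u => match u with
      | Sum.inl i => decide ((i : ℕ) < s)
      | Sum.inr _ => false with hpXb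
  set pYb : (Fin n ⊕ Fin n) → Bool :=
    fun u => match u with
      | Sum.inl _ => false
      | Sum.inr j => decide ((j : ℕ) < s) with hpYb
  set S : Set (Fin n ⊕ Fin n) := {v | v ∉ W} with hS
  set G' := (Mgraph n n s t).induce S with hG'
  set qX : ↥S → Bool := fun v => pXb v.val with hqX
  set qY : ↥S → Bool := fun v => pYb v.val with hqY
  obtain ⟨w, hw⟩ := H W hWX hWY x hxX y hyY hxW hyW
  -- adjacency: a neighbour of a remaining X₁ vertex is a remaining Y₁ vertex
  have hadj : ∀ a b : ↥S, G'.Adj a b → qX b = true → qY a = true := by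
    rintro ⟨va, hva⟩ ⟨vb, hvb⟩ hab hqb
    rcases vb with i | j
    · rcases va with i' | j'
      · exact (hab : (Mgraph n n s t).Adj (Sum.inl i') (Sum.inl i)).elim
      · have hadj' : s ≤ (i : ℕ) ∨ (j' : ℕ) < n - t := hab
        have hi : (i : ℕ) < s := by simpa [hqX, hpXb] using hqb
        have hj' : (j' : ℕ) < n - t := by omega
        have hj'2 : (j' : ℕ) < s + p := by omega
        have hnW : Sum.inr j' ∉ W := hva
        have : ¬ (s ≤ (j' : ℕ) ∧ (j' : ℕ) < s + p) := by
          intro hc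
          exact hnW (by simp [hW, hA, hc.1, hc.2])
        have : (j' : ℕ) < s := by omega
        simp [hqY, hpYb, this]
    · simp [hqX, hpXb] at hqb
  have hnd : w.support.Nodup := hw.isPath.support_nodup
  have hmem : ∀ v : ↥S, v ∈ w.support := fun v =>
    hw.mem_support v
  -- counting via the projected list
  set M : List (Fin n ⊕ Fin n) := w.support.map Subtype.val with hM
  have hMnd : M.Nodup := hnd.map Subtype.val_injective
  have hMmem : ∀ u, u ∈ M ↔ u ∉ W := by
    intro u
    constructor
    · intro hu
      obtain ⟨v, _, rfl⟩ := List.mem_map.mp hu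
      exact v.2
    · intro hu
      exact List.mem_map.mpr ⟨⟨u, hu⟩, hmem _, rfl⟩
  have hMfin : M.toFinset = Wᶜ := by
    ext u; simp [List.mem_toFinset, hMmem u]
  have hcountP : ∀ q : (Fin n ⊕ Fin n) → Bool,
      List.countP (fun v : ↥S => q v.val) w.support = (Wᶜ.filter (fun u => q u = true)).card := by
    intro q
    have h1 : List.countP (fun v : ↥S => q v.val) w.support = List.countP q M := by
      rw [hM, List.countP_map]; rfl
    rw [h1, List.countP_eq_length_filter, ← List.toFinset_card_of_nodup (hMnd.filter q),
      List.toFinset_filter, hMfin]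
  have hXcard : (Wᶜ.filter (fun u => pXb u = true)).card = s := by
    have : Wᶜ.filter (fun u => pXb u = true)
        = (Finset.univ.filter (fun i : Fin n => 0 ≤ (i : ℕ) ∧ (i : ℕ) < s)).image Sum.inl := by
      ext v
      rcases v with i | j
      · simp only [Finset.mem_filter, Finset.mem_compl, Finset.mem_image, Finset.mem_univ,
          true_and, hpXb, hW, hA]
        constructor
        · rintro ⟨-, hi⟩
          exact ⟨i, ⟨by omega, by simpa using hi⟩, rfl⟩
        · rintro ⟨i', ⟨-, hi'⟩, h⟩
          cases h
          refine ⟨by simp; omega, by simpa using hi'⟩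
      · simp [hpXb, hW, hA]
    rw [this, Finset.card_image_of_injective _ Sum.inl_injective,
      card_filter_fin n 0 s (by omega)]
    omega
  have hYcard : (Wᶜ.filter (fun u => pYb u = true)).card = s := by
    have : Wᶜ.filter (fun u => pYb u = true)
        = (Finset.univ.filter (fun j : Fin n => 0 ≤ (j : ℕ) ∧ (j : ℕ) < s)).image Sum.inr := by
      ext v
      rcases v with i | j
      · simp [hpYb, hW, hA]
      · simp only [Finset.mem_filter, Finset.mem_compl, Finset.mem_image, Finset.mem_univ,
          true_and, hpYb, hW, hA]
        constructor
        · rintro ⟨-, hj⟩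
          exact ⟨j, ⟨by omega, by simpa using hj⟩, rfl⟩
        · rintro ⟨j', ⟨-, hj'⟩, h⟩
          cases h
          refine ⟨by simp; omega, by simpa using hj'⟩
    rw [this, Finset.card_image_of_injective _ Sum.inr_injective,
      card_filter_fin n 0 s (by omega)]
    omega
  have hXs : List.countP qX w.support = s := by rw [hqX, hcountP pXb, hXcard]
  have hYs : List.countP qY w.support = s := by rw [hqY, hcountP pYb, hYcard]
  -- tail and dropLast counts
  have htail : List.countP qX w.support.tail = s := by
    have hc : List.countP qX w.support
        = List.countP qX w.support.tail + (if qX ⟨x, hxW⟩ = true then 1 else 0) := by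
      conv_lhs => rw [w.support_eq_cons]
      rw [List.countP_cons]
    have hqx0 : qX ⟨x, hxW⟩ = false := by
      simp [hqX, hpXb, hxdef]
    rw [hqx0] at hc
    simp at hc
    omega
  have hdrop : List.countP qY w.support.dropLast = s - 1 := by
    have happ : w.support.dropLast ++ [(⟨y, hyW⟩ : ↥S)] = w.support := by
      have h1 := List.dropLast_append_getLast (l := w.support) w.support_ne_nil
      rwa [w.getLast_support] at h1
    have hc : List.countP qY w.support
        = List.countP qY w.support.dropLast + List.countP qY [(⟨y, hyW⟩ : ↥S)] := by
      conv_lhs => rw [← happ]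
      rw [List.countP_append]
    have hqy1 : qY ⟨y, hyW⟩ = true := by
      simp only [hqY, hpYb, hydef]
      simp
      omega
    rw [hc] at hYs
    simp [hqy1] at hYs
    omega
  -- the dart count comparison
  have hD1 : List.countP (fun d : G'.Dart => qX d.snd) w.darts
      = List.countP qX w.support.tail := by
    rw [← w.map_snd_darts, List.countP_map]; rfl
  have hD2 : List.countP (fun d : G'.Dart => qY d.fst) w.darts
      = List.countP qY w.support.dropLast := by
    rw [← w.map_fst_darts, List.countP_map]; rfl
  have hmono : List.countP (fun d : G'.Dart => qX d.snd) w.darts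
      ≤ List.countP (fun d : G'.Dart => qY d.fst) w.darts :=
    List.countP_mono_left (fun d _ h => hadj d.fst d.snd d.adj h)
  rw [hD1, hD2, htail, hdrop] at hmono
  omega
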